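/- For u ⊆ μ, the restriction map p ↦ p↾u (restricting the domain of p to u ∩ dom(p)) from Q_μ to Q_{μ,u} satisfies: (a) p↾u ∈ Q_{μ,u} and p↾u ≤ p in Q_μ; (b) if q ∈ Q_{μ,u} and p↾u ≤ q, then p and q are compatible in Q_μ. -/

import Mathlib

/-- A condition in the forcing `Q_μ` (over an index type `α`): a finite partial
function from `α` into binary sequences of a common length `n`. We represent the
values as a total function `f : α → ℕ → Bool` which is `false` (i.e. `0`)
outside `dom × [0, n)`. -/
structure QCond (α : Type) where
  n : ℕ
  dom : Finset α
  f : α → ℕ → Bool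
  hf : ∀ a k, f a k = true → a ∈ dom ∧ k < n

/-- The order on `Q_μ`: `p ≤ q` iff `dom p ⊆ dom q`, each `p a` is an initial
segment of `q a`, and for distinct `a, b ∈ dom p` and `k ∈ [n_p, n_q)`,
`q a k = 0` or `q b k = 0`. -/
def QLE {α : Type} (p q : QCond α) : Prop :=
  p.dom ⊆ q.dom ∧ p.n ≤ q.n ∧
  (∀ a ∈ p.dom, ∀ k < p.n, q.f a k = p.f a k) ∧
  (∀ a ∈ p.dom, ∀ b ∈ p.dom, a ≠ b →
    ∀ k, p.n ≤ k → k < q.n → q.f a k = false ∨ q.f b k = false)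

/-- Compatibility: existence of a common extension. -/
def QCompatible {α : Type} (p q : QCond α) : Prop :=
  ∃ r : QCond α, QLE p r ∧ QLE q r

/-- The restriction `p ↾ u` of a condition `p` to a set `u ⊆ α`. -/
def QRestrict {α : Type} (p : QCond α) (u : Set α) [DecidablePred (· ∈ u)] : QCond α where
  n := p.n
  dom := p.dom.filter (· ∈ u)
  f := fun a k => if a ∈ u then p.f a k else false
  hf := by
    intro a k h
    by_cases ha : a ∈ u
    · simp only [ha, if_true] at h
      exact ⟨Finset.mem_filter.2 ⟨(p.hf a k h).1, ha⟩, (p.hf a k h).2⟩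
    · simp [ha] at h

/-- (a) `p ↾ u` is a condition of `Q_{μ,u}` and `p ↾ u ≤ p`;
    (b) if `q ∈ Q_{μ,u}` and `p ↾ u ≤ q`, then `p` and `q` are compatible in `Q_μ`. -/
theorem QRestrict_projection {α : Type} (p : QCond α) (u : Set α) [DecidablePred (· ∈ u)] :
    (↑(QRestrict p u).dom ⊆ u ∧ QLE (QRestrict p u) p) ∧
    (∀ q : QCond α, ↑q.dom ⊆ u → QLE (QRestrict p u) q →
      ∃ r : QCond α, QLE p r ∧ QLE q r) := by
  constructor
  · constructor
    · intro a ha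
      simp only [QRestrict, Finset.coe_filter, Set.mem_setOf_eq] at ha
      exact ha.2
    · refine ⟨?_, le_rfl, ?_, ?_⟩
      · intro a ha
        exact (Finset.mem_filter.1 ha).1
      · intro a ha k hk
        have hau : a ∈ u := (Finset.mem_filter.1 ha).2
        simp [QRestrict, hau]
      · intro a ha b hb hab k hk1 hk2
        exact absurd (lt_of_le_of_lt hk1 hk2) (lt_irrefl _)
  · intro q hqu hle
    obtain ⟨hdom, hn, hinit, hanti⟩ := hle
    haveI := Classical.decEq α
    have hpn : p.n ≤ q.n := hn
    refine ⟨⟨q.n, p.dom ∪ q.dom,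
      fun a k => if a ∈ u then q.f a k else p.f a k, ?_⟩, ?_, ?_⟩
    · intro a k h
      by_cases hau : a ∈ u
      · simp only [hau, if_true] at h
        exact ⟨Finset.mem_union_right _ (q.hf a k h).1, (q.hf a k h).2⟩
      · simp only [hau, if_false] at h
        exact ⟨Finset.mem_union_left _ (p.hf a k h).1, lt_of_lt_of_le (p.hf a k h).2 hpn⟩
    · refine ⟨Finset.subset_union_left, hpn, ?_, ?_⟩
      · intro a ha k hk
        by_cases hau : a ∈ u
        · simp only [hau, if_true]
          have haf : a ∈ (QRestrict p u).dom := Finset.mem_filter.2 ⟨ha, hau⟩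
          have := hinit a haf k hk
          simpa [QRestrict, hau] using this
        · simp [hau]
      · intro a ha b hb hab k hk1 hk2
        by_cases hau : a ∈ u
        · by_cases hbu : b ∈ u
          · simp only [hau, hbu, if_true]
            exact hanti a (Finset.mem_filter.2 ⟨ha, hau⟩) b (Finset.mem_filter.2 ⟨hb, hbu⟩)
              hab k hk1 hk2
          · right
            simp only [hbu, if_false]
            by_contra h
            have := (p.hf b k (Bool.of_not_eq_false h)).2
            omega
        · left
          simp only [hau, if_false]
          by_contra h
          have := (p.hf a k (Bool.of_not_eq_false h)).2
          omega
    · refine ⟨Finset.subset_union_right, le_rfl, ?_, ?_⟩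
      · intro a ha k hk
        have hau : a ∈ u := hqu ha
        simp [hau]
      · intro a ha b hb hab k hk1 hk2
        exact absurd (lt_of_le_of_lt hk1 hk2) (lt_irrefl _)
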